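/- Let n ≥ 1, c ∈ ℂⁿ, and let w ∈ ℂ with w ≠ 0 and w² ≠ 1; fix r₁, r₂ ∈ ℂ with r₁² = 1 + w, r₂² = 1 − w and set A₁ := 1/(2r₁) + 1/(2·i·r₂), A₂ := 1/(2r₁) − 1/(2·i·r₂). Let a₁, …, aₙ, b₁, …, bₙ ∈ ℂ and set L₁(z) := Σⱼ aⱼzⱼ, L₂(z) := Σⱼ bⱼzⱼ; let Φ, Ψ : ℂⁿ → ℂ satisfy Φ(z + c) = Φ(z) and Ψ(z + c) = Ψ(z) for all z; and let d₁, d₂, d₃, d₄ ∈ ℂ satisfy A₁·exp(L₁(c) + d₁ − d₂) = A₂, A₁·exp(L₁(c) + d₂ − d₁) = A₂, A₂·exp(L₂(c) + d₃ − d₄) = A₁ and A₂·exp(L₂(c) + d₄ − d₃) = A₁. Define f(z) := (A₁·exp(L₁(z) + Φ(z) + d₁) + A₂·exp(L₂(z) + Ψ(z) + d₃))/√2 and g(z) := (A₁·exp(L₁(z) + Φ(z) + d₂) + A₂·exp(L₂(z) + Ψ(z) + d₄))/√2. Then for all z ∈ ℂⁿ: f(z)² + 2w·f(z)·g(z + c)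 + g(z + c)² = exp(L₁(z) + L₂(z) + Φ(z) + Ψ(z) + d₁ + d₃) and g(z)² + 2w·g(z)·f(z + c) + f(z + c)² = exp(L₁(z) + L₂(z) + Φ(z) + Ψ(z) + d₂ + d₄). -/

import Mathlib

theorem stmt_10 (n : ℕ) (hn : 1 ≤ n) (c : Fin n → ℂ) (w r₁ r₂ A₁ A₂ : ℂ)
    (hw : w ≠ 0) (hw2 : w ^ 2 ≠ 1)
    (hr₁ : r₁ ^ 2 = 1 + w) (hr₂ : r₂ ^ 2 = 1 - w)
    (hA₁ : A₁ = 1 / (2 * r₁) + 1 / (2 * Complex.I * r₂))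
    (hA₂ : A₂ = 1 / (2 * r₁) - 1 / (2 * Complex.I * r₂))
    (a b : Fin n → ℂ) (L₁ L₂ : (Fin n → ℂ) → ℂ)
    (hL₁ : ∀ z, L₁ z = ∑ j, a j * z j) (hL₂ : ∀ z, L₂ z = ∑ j, b j * z j)
    (Φ Ψ : (Fin n → ℂ) → ℂ) (hΦ : ∀ z, Φ (z + c) = Φ z) (hΨ : ∀ z, Ψ (z + c) = Ψ z)
    (d₁ d₂ d₃ d₄ : ℂ)
    (h₁ : A₁ * Complex.exp (L₁ c + d₁ - d₂) = A₂)
    (h₂ : A₁ * Complex.exp (L₁ c + d₂ - d₁) = A₂)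
    (h₃ : A₂ * Complex.exp (L₂ c + d₃ - d₄) = A₁)
    (h₄ : A₂ * Complex.exp (L₂ c + d₄ - d₃) = A₁)
    (f g : (Fin n → ℂ) → ℂ)
    (hf : ∀ z, f z = (A₁ * Complex.exp (L₁ z + Φ z + d₁)
      + A₂ * Complex.exp (L₂ z + Ψ z + d₃)) / (Real.sqrt 2 : ℂ))
    (hg : ∀ z, g z = (A₁ * Complex.exp (L₁ z + Φ z + d₂)
      + A₂ * Complex.exp (L₂ z + Ψ z + d₄)) / (Real.sqrt 2 : ℂ)) :
    ∀ z : Fin n → ℂ,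
      f z ^ 2 + 2 * w * f z * g (z + c) + g (z + c) ^ 2
        = Complex.exp (L₁ z + L₂ z + Φ z + Ψ z + d₁ + d₃) ∧
      g z ^ 2 + 2 * w * g z * f (z + c) + f (z + c) ^ 2
        = Complex.exp (L₁ z + L₂ z + Φ z + Ψ z + d₂ + d₄) := by
  have hw1 : (1 : ℂ) + w ≠ 0 := by
    intro h
    apply hw2
    have : w = -1 := by linear_combination h
    rw [this]; ring
  have hw1' : (1 : ℂ) - w ≠ 0 := by
    intro h
    apply hw2
    have : w = 1 := by linear_combination -h
    rw [this]; ring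
  have hr10 : r₁ ≠ 0 := by
    intro h; apply hw1; rw [← hr₁, h]; ring
  have hr20 : r₂ ≠ 0 := by
    intro h; apply hw1'; rw [← hr₂, h]; ring
  have hI : Complex.I ≠ 0 := Complex.I_ne_zero
  have h1 : (1 + w) * (1 / (2 * r₁)) ^ 2 = 1 / 4 := by
    field_simp
    linear_combination (-4 : ℂ) * hr₁
  have h2 : (1 - w) * (1 / (2 * Complex.I * r₂)) ^ 2 = -(1 / 4) := by
    field_simp
    linear_combination (-4 : ℂ) * hr₂ + (4 * r₂ ^ 2) * Complex.I_sq
  have key1 : A₁ ^ 2 + A₂ ^ 2 + 2 * w * A₁ * A₂ = 0 := by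
    rw [hA₁, hA₂]; linear_combination 2 * h1 + 2 * h2
  have key2 : 4 * A₁ * A₂ + 2 * w * (A₁ ^ 2 + A₂ ^ 2) = 2 := by
    rw [hA₁, hA₂]; linear_combination 4 * h1 - 4 * h2
  have hs2 : ((Real.sqrt 2 : ℝ) : ℂ) ^ 2 = 2 := by
    norm_cast
    rw [Real.sq_sqrt] <;> norm_num
  have hs0 : ((Real.sqrt 2 : ℝ) : ℂ) ≠ 0 := by
    intro h
    have := hs2
    rw [h] at this
    norm_num at this
  have main : ∀ U V : ℂ,
      ((A₁ * U + A₂ * V) / (Real.sqrt 2 : ℂ)) ^ 2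
        + 2 * w * ((A₁ * U + A₂ * V) / (Real.sqrt 2 : ℂ)) * ((A₂ * U + A₁ * V) / (Real.sqrt 2 : ℂ))
        + ((A₂ * U + A₁ * V) / (Real.sqrt 2 : ℂ)) ^ 2 = U * V := by
    intro U V
    have expand : (A₁ * U + A₂ * V) ^ 2 + 2 * w * (A₁ * U + A₂ * V) * (A₂ * U + A₁ * V)
        + (A₂ * U + A₁ * V) ^ 2 = 2 * (U * V) := by
      linear_combination U ^ 2 * key1 + V ^ 2 * key1 + U * V * key2
    have hrw : ((A₁ * U + A₂ * V) / (Real.sqrt 2 : ℂ)) ^ 2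
        + 2 * w * ((A₁ * U + A₂ * V) / (Real.sqrt 2 : ℂ)) * ((A₂ * U + A₁ * V) / (Real.sqrt 2 : ℂ))
        + ((A₂ * U + A₁ * V) / (Real.sqrt 2 : ℂ)) ^ 2
        = ((A₁ * U + A₂ * V) ^ 2 + 2 * w * (A₁ * U + A₂ * V) * (A₂ * U + A₁ * V)
          + (A₂ * U + A₁ * V) ^ 2) / ((Real.sqrt 2 : ℂ)) ^ 2 := by
      field_simp
    rw [hrw, hs2, expand]
    ring
  -- exp-shift relations
  have h₂' : A₁ * Complex.exp (L₁ c) * Complex.exp d₂ = A₂ * Complex.exp d₁ := by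
    have e : Complex.exp (L₁ c) * Complex.exp d₂
        = Complex.exp (L₁ c + d₂ - d₁) * Complex.exp d₁ := by
      rw [← Complex.exp_add, ← Complex.exp_add]; ring_nf
    rw [mul_assoc, e, ← mul_assoc, h₂]
  have h₁' : A₁ * Complex.exp (L₁ c) * Complex.exp d₁ = A₂ * Complex.exp d₂ := by
    have e : Complex.exp (L₁ c) * Complex.exp d₁
        = Complex.exp (L₁ c + d₁ - d₂) * Complex.exp d₂ := by
      rw [← Complex.exp_add, ← Complex.exp_add]; ring_nf
    rw [mul_assoc, e, ← mul_assoc, h₁]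
  have h₄' : A₂ * Complex.exp (L₂ c) * Complex.exp d₄ = A₁ * Complex.exp d₃ := by
    have e : Complex.exp (L₂ c) * Complex.exp d₄
        = Complex.exp (L₂ c + d₄ - d₃) * Complex.exp d₃ := by
      rw [← Complex.exp_add, ← Complex.exp_add]; ring_nf
    rw [mul_assoc, e, ← mul_assoc, h₄]
  have h₃' : A₂ * Complex.exp (L₂ c) * Complex.exp d₃ = A₁ * Complex.exp d₄ := by
    have e : Complex.exp (L₂ c) * Complex.exp d₃
        = Complex.exp (L₂ c + d₃ - d₄) * Complex.exp d₄ := by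
      rw [← Complex.exp_add, ← Complex.exp_add]; ring_nf
    rw [mul_assoc, e, ← mul_assoc, h₃]
  intro z
  have hLc₁ : L₁ (z + c) = L₁ z + L₁ c := by
    simp only [hL₁, Pi.add_apply, mul_add]
    rw [Finset.sum_add_distrib]
  have hLc₂ : L₂ (z + c) = L₂ z + L₂ c := by
    simp only [hL₂, Pi.add_apply, mul_add]
    rw [Finset.sum_add_distrib]
  constructor
  · -- first equation
    have hfz : f z = (A₁ * (Complex.exp (L₁ z + Φ z) * Complex.exp d₁)
        + A₂ * (Complex.exp (L₂ z + Ψ z) * Complex.exp d₃)) / (Real.sqrt 2 : ℂ) := by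
      rw [hf]
      rw [← Complex.exp_add, ← Complex.exp_add]
    have hgz : g (z + c) = (A₂ * (Complex.exp (L₁ z + Φ z) * Complex.exp d₁)
        + A₁ * (Complex.exp (L₂ z + Ψ z) * Complex.exp d₃)) / (Real.sqrt 2 : ℂ) := by
      rw [hg, hLc₁, hLc₂, hΦ, hΨ]
      congr 1
      have e1 : A₁ * Complex.exp (L₁ z + L₁ c + Φ z + d₂)
          = A₂ * (Complex.exp (L₁ z + Φ z) * Complex.exp d₁) := by
        calc A₁ * Complex.exp (L₁ z + L₁ c + Φ z + d₂)
            = (A₁ * Complex.exp (L₁ c) * Complex.exp d₂) * Complex.exp (L₁ z + Φ z) := by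
              rw [mul_assoc, mul_assoc, ← Complex.exp_add, ← Complex.exp_add]
              congr 2
              ring
          _ = A₂ * (Complex.exp (L₁ z + Φ z) * Complex.exp d₁) := by rw [h₂']; ring
      have e2 : A₂ * Complex.exp (L₂ z + L₂ c + Ψ z + d₄)
          = A₁ * (Complex.exp (L₂ z + Ψ z) * Complex.exp d₃) := by
        calc A₂ * Complex.exp (L₂ z + L₂ c + Ψ z + d₄)
            = (A₂ * Complex.exp (L₂ c) * Complex.exp d₄) * Complex.exp (L₂ z + Ψ z) := by
              rw [mul_assoc, mul_assoc, ← Complex.exp_add, ← Complex.exp_add]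
              congr 2
              ring
          _ = A₁ * (Complex.exp (L₂ z + Ψ z) * Complex.exp d₃) := by rw [h₄']; ring
      rw [e1, e2]
    rw [hfz, hgz, main]
    rw [← Complex.exp_add, ← Complex.exp_add, ← Complex.exp_add]
    congr 1
    ring
  · -- second equation
    have hgz : g z = (A₁ * (Complex.exp (L₁ z + Φ z) * Complex.exp d₂)
        + A₂ * (Complex.exp (L₂ z + Ψ z) * Complex.exp d₄)) / (Real.sqrt 2 : ℂ) := by
      rw [hg]
      rw [← Complex.exp_add, ← Complex.exp_add]
    have hfz : f (z + c) = (A₂ * (Complex.exp (L₁ z + Φ z) * Complex.exp d₂)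
        + A₁ * (Complex.exp (L₂ z + Ψ z) * Complex.exp d₄)) / (Real.sqrt 2 : ℂ) := by
      rw [hf, hLc₁, hLc₂, hΦ, hΨ]
      congr 1
      have e1 : A₁ * Complex.exp (L₁ z + L₁ c + Φ z + d₁)
          = A₂ * (Complex.exp (L₁ z + Φ z) * Complex.exp d₂) := by
        calc A₁ * Complex.exp (L₁ z + L₁ c + Φ z + d₁)
            = (A₁ * Complex.exp (L₁ c) * Complex.exp d₁) * Complex.exp (L₁ z + Φ z) := by
              rw [mul_assoc, mul_assoc, ← Complex.exp_add, ← Complex.exp_add]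
              congr 2
              ring
          _ = A₂ * (Complex.exp (L₁ z + Φ z) * Complex.exp d₂) := by rw [h₁']; ring
      have e2 : A₂ * Complex.exp (L₂ z + L₂ c + Ψ z + d₃)
          = A₁ * (Complex.exp (L₂ z + Ψ z) * Complex.exp d₄) := by
        calc A₂ * Complex.exp (L₂ z + L₂ c + Ψ z + d₃)
            = (A₂ * Complex.exp (L₂ c) * Complex.exp d₃) * Complex.exp (L₂ z + Ψ z) := by
              rw [mul_assoc, mul_assoc, ← Complex.exp_add, ← Complex.exp_add]
              congr 2
              ring
          _ = A₁ * (Complex.exp (L₂ z + Ψ z) * Complex.exp d₄) := by rw [h₃']; ring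
      rw [e1, e2]
    rw [hgz, hfz, main]
    rw [← Complex.exp_add, ← Complex.exp_add, ← Complex.exp_add]
    congr 1
    ring
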